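/- (Roy's identity for chores, direction 2.) Under the same assumptions, fix p ∈ ℝ^m_{≥0}, p ≠ 0, and let x be an optimal demand: x ≥ 0, ⟨p, x⟩ = B, and d(x) = h(p, B). Then g := x / (B · h(p, B)) is a subgradient of q ↦ 1/ĥ(q, B) at p, i.e., 1/ĥ(q, B) ≥ 1/ĥ(p, B) + ⟨g, q − p⟩ for all q ∈ ℝ^m. -/

import Mathlib

theorem stmt13 {m : ℕ} (d : (Fin m → ℝ) → ℝ) (B : ℝ) (hB : 0 < B)
    (hconv : ConvexOn ℝ {x : Fin m → ℝ | 0 ≤ x} d)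
    (hmono : ∀ x y : Fin m → ℝ, 0 ≤ y → y ≤ x → d y ≤ d x)
    (hhom : ∀ c : ℝ, 0 < c → ∀ x : Fin m → ℝ, 0 ≤ x → d (c • x) = c * d x)
    (hpos : ∀ x : Fin m → ℝ, 0 ≤ x → x ≠ 0 → 0 < d x)
    (h : (Fin m → ℝ) → ℝ)
    (hh : ∀ p : Fin m → ℝ, 0 ≤ p → p ≠ 0 →
      IsLeast {t : ℝ | ∃ x : Fin m → ℝ, 0 ≤ x ∧ ∑ j, p j * x j = B ∧ d x = t} (h p))
    (F : (Fin m → ℝ) → ℝ)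
    (hF : ∀ q : Fin m → ℝ, (fun j => max (q j) 0) ≠ 0 → F q = 1 / h (fun j => max (q j) 0))
    (hF0 : ∀ q : Fin m → ℝ, (fun j => max (q j) 0) = 0 → F q = 0)
    (p : Fin m → ℝ) (hp : 0 ≤ p) (hp0 : p ≠ 0)
    (x : Fin m → ℝ) (hx : 0 ≤ x) (hxp : ∑ j, p j * x j = B) (hxopt : d x = h p) :
    ∀ q : Fin m → ℝ, F p + ∑ j, (x j / (B * h p)) * (q j - p j) ≤ F q := by
  intro q
  -- x ≠ 0
  have hx0 : x ≠ 0 := by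
    intro hx0
    rw [hx0] at hxp
    simp at hxp
    exact hB.ne' hxp.symm
  have hhp : 0 < h p := by rw [← hxopt]; exact hpos x hx hx0
  have hD : 0 < B * h p := mul_pos hB hhp
  -- F p = 1 / h p
  have hPmax : (fun j => max (p j) 0) = p := by
    funext j; exact max_eq_left (hp j)
  have hFp : F p = 1 / h p := by
    rw [hF p (by rw [hPmax]; exact hp0), hPmax]
  -- rewrite the sum
  have hsum : ∑ j, (x j / (B * h p)) * (q j - p j)
      = ((∑ j, x j * q j) - B) / (B * h p) := by
    rw [← hxp, ← Finset.sum_sub_distrib, Finset.sum_div]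
    exact Finset.sum_congr rfl fun j _ => by ring
  set Q : Fin m → ℝ := fun j => max (q j) 0 with hQdef
  have hQnn : (0 : Fin m → ℝ) ≤ Q := fun j => le_max_right _ _
  have hTS : ∑ j, x j * q j ≤ ∑ j, x j * Q j :=
    Finset.sum_le_sum fun j _ => mul_le_mul_of_nonneg_left (le_max_left _ _) (hx j)
  by_cases hQ0 : Q = 0
  · -- F q = 0
    rw [hF0 q hQ0, hFp, hsum]
    have hT0 : ∑ j, x j * q j ≤ 0 := by
      refine hTS.trans_eq ?_
      simp [hQ0]
    rw [div_add_div _ _ hhp.ne' hD.ne']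
    apply div_nonpos_of_nonpos_of_nonneg
    · nlinarith
    · positivity
  · -- F q = 1 / h Q
    rw [hF q hQ0, hFp, hsum]
    obtain ⟨⟨x', hx'nn, hx'sum, hx'd⟩, hlb⟩ := hh Q hQnn hQ0
    have hx'0 : x' ≠ 0 := by
      intro h0; rw [h0] at hx'sum; simp at hx'sum; exact hB.ne' hx'sum.symm
    have hhQ : 0 < h Q := hx'd ▸ hpos x' hx'nn hx'0
    set S := ∑ j, x j * Q j with hSdef
    have hSnn : 0 ≤ S :=
      Finset.sum_nonneg fun j _ => mul_nonneg (hx j) (hQnn j)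
    have hkey : S * h Q ≤ B * h p := by
      rcases eq_or_lt_of_le hSnn with hS0 | hSpos
      · rw [← hS0, zero_mul]; positivity
      · have hc : 0 < B / S := div_pos hB hSpos
        have hmem : h Q ≤ d ((B / S) • x) := by
          apply hlb
          refine ⟨(B / S) • x, ?_, ?_, rfl⟩
          · intro j; exact mul_nonneg hc.le (hx j)
          · have : ∑ j, Q j * ((B / S) • x) j = (B / S) * ∑ j, x j * Q j := by
              rw [Finset.mul_sum]
              exact Finset.sum_congr rfl fun j _ => by
                simp [Pi.smul_apply, smul_eq_mul]; ring
            rw [this, ← hSdef, div_mul_cancel₀ _ hSpos.ne']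
        rw [hhom _ hc x hx, hxopt] at hmem
        rw [mul_comm]
        calc h Q * S ≤ (B / S * h p) * S := by
              exact mul_le_mul_of_nonneg_right hmem hSnn
          _ = B * h p := by field_simp
    have h1 : ((∑ j, x j * q j) - B) / (B * h p) ≤ (S - B) / (B * h p) :=
      div_le_div_of_nonneg_right (by linarith) hD.le
    have h2 : 1 / h p + (S - B) / (B * h p) = S / (B * h p) := by
      field_simp
      ring
    have h3 : S / (B * h p) ≤ 1 / h Q := by
      rw [div_le_div_iff₀ hD hhQ]
      linarith
    linarith
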